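/- For a countable graph G on vertex set ℕ and ordinal α, the graph G_α on vertex set T_α, where u ~ v iff u and v are <_α-comparable and d_α(u) ~_G d_α(v), contains no infinite one-way path (ray) as a subgraph, provided α < λ⁺ and the vertex set has size at most λ for an infinite cardinal λ; in particular G_α contains no path of length ω as a (not necessarily induced) subgraph. -/

import Mathlib

open Cardinal Ordinal

/-- The poset `T α`: strictly decreasing finite lists of ordinals `< α`, ordered by
reverse strict-prefix; the empty list is the top element, and the lists starting with `β`
form the copy of `T β`. -/
def TT (α : Ordinal) : Type 1 :=
  {l : List Ordinal // l.Pairwise (· > ·) ∧ ∀ x ∈ l, x < α}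

instance instPOTT (α : Ordinal) : PartialOrder (TT α) where
  le u v := v.1 <+: u.1
  le_refl u := List.prefix_refl _
  le_trans _ _ _ h1 h2 := List.IsPrefix.trans h2 h1
  le_antisymm _ _ h1 h2 :=
    Subtype.ext (List.IsPrefix.eq_of_length h2 ((List.IsPrefix.length_le h2).antisymm (List.IsPrefix.length_le h1)))

/-- The top element of `T α`. -/
def topT (α : Ordinal) : TT α := ⟨[], by simp, by simp⟩

/-- The rank function of the reversed order `⟨T α, >⟩`. -/
def dT {α : Ordinal} (v : TT α) : ℕ := v.1.length

/-- The rank function of `⟨T α, <⟩`; the top element has rank `α`. -/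
def rT {α : Ordinal} (v : TT α) : Ordinal := v.1.getLastD α

/-- The graph `G_α` on `T α`: `u ~ v` iff `u, v` are comparable and `d u ~_G d v`. -/
def Gg (G : SimpleGraph ℕ) (α : Ordinal) : SimpleGraph (TT α) where
  Adj u v := u ≠ v ∧ (u ≤ v ∨ v ≤ u) ∧ G.Adj (dT u) (dT v)
  symm := ⟨fun _ _ h => ⟨Ne.symm h.1, h.2.1.symm, h.2.2.symm⟩⟩
  loopless := ⟨fun _ h => h.1 rfl⟩

/-- The one-way infinite path `P_ω` on `ℕ`. -/
def rayG : SimpleGraph ℕ := SimpleGraph.fromRel (fun m n => n = m + 1)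

/-- `A` is a (not necessarily induced) subgraph of `B`. -/
def SubCopy {X Y : Type*} (A : SimpleGraph X) (B : SimpleGraph Y) : Prop :=
  ∃ f : X ↪ Y, ∀ u v, A.Adj u v → B.Adj (f u) (f v)

/-- `R` is (isomorphic to) the countable random graph: the extension property. -/
def IsRado (R : SimpleGraph ℕ) : Prop :=
  ∀ A B : Finset ℕ, Disjoint A B →
    ∃ v, v ∉ A ∧ v ∉ B ∧ (∀ a ∈ A, R.Adj v a) ∧ (∀ b ∈ B, ¬R.Adj v b)

/-- An `(s, ξ)`-embedding: an induced embedding of some `G_α`, `ξ ≤ α < λ⁺`, into `H`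
whose image contains `s` as the top part of a chain with `d`-values `0, …, n` and whose
last vertex has rank `> ξ`. -/
def IsSXEmb {V : Type} (G : SimpleGraph ℕ) (lam : Cardinal) (H : SimpleGraph V)
    (s : List V) (ξ : Ordinal) : Prop :=
  ∃ α : Ordinal, ξ ≤ α ∧ α < (Order.succ lam).ord ∧
    ∃ (f : Gg G α ↪g H) (t : List (TT α)),
      s = t.map ⇑f ∧
      (∀ i : Fin t.length, dT (t.get i) = i.1) ∧
      (∀ u ∈ t, ∀ v ∈ t, u ≤ v ∨ v ≤ u) ∧
      (∀ v ∈ t.getLast?, ξ < rT v)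

/-- The set `U` of finite sequences admitting `(s, ξ)`-embeddings for all `ξ < λ⁺`. -/
def UU {V : Type} (G : SimpleGraph ℕ) (lam : Cardinal) (H : SimpleGraph V) :
    Set (List V) :=
  {s | ∀ ξ < (Order.succ lam).ord, IsSXEmb G lam H s ξ}



section NoRayAux

lemma rayG_adj_succ (n : ℕ) : rayG.Adj n (n+1) := by
  rw [rayG, SimpleGraph.fromRel_adj]
  exact ⟨by omega, Or.inl rfl⟩

lemma rayG_adj_shift {u v : ℕ} (N : ℕ) (h : rayG.Adj u v) : rayG.Adj (u+N) (v+N) := by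
  rw [rayG, SimpleGraph.fromRel_adj] at h ⊢
  omega

lemma headI_eq_of_prefix {l1 l2 : List Ordinal} (h : l1 <+: l2) (h1 : l1 ≠ []) :
    l1.headI = l2.headI := by
  obtain ⟨s, rfl⟩ := h
  cases l1 with
  | nil => exact absurd rfl h1
  | cons a t => simp

lemma tail_prefix_tail {l1 l2 : List Ordinal} (h : l1 <+: l2) : l1.tail <+: l2.tail := by
  obtain ⟨s, rfl⟩ := h
  cases l1 with
  | nil => exact List.nil_prefix
  | cons a t => simp

theorem noray (α : Ordinal) : ∀ G : SimpleGraph ℕ, ¬ SubCopy rayG (Gg G α) := by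
  induction α using Ordinal.induction with
  | h α IH =>
    rintro G ⟨f, hf⟩
    obtain ⟨N, hN⟩ : ∃ N, ∀ n, N ≤ n → (f n).1 ≠ [] := by
      by_cases h : ∃ n, (f n).1 = []
      · obtain ⟨n0, hn0⟩ := h
        refine ⟨n0 + 1, fun n hn he => ?_⟩
        have : n = n0 := f.injective (Subtype.ext (he.trans hn0.symm))
        omega
      · exact ⟨0, fun n _ he => h ⟨n, he⟩⟩
    set l : ℕ → List Ordinal := fun n => (f (n + N)).1 with hl
    have hne : ∀ n, l n ≠ [] := fun n => hN (n+N) (by omega)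
    have hadj : ∀ n, (Gg G α).Adj (f (n+N)) (f (n+1+N)) :=
      fun n => hf (n+N) (n+1+N) (rayG_adj_shift N (rayG_adj_succ n))
    have hcomp : ∀ n, l n <+: l (n+1) ∨ l (n+1) <+: l n := by
      intro n
      rcases (hadj n).2.1 with h | h
      · exact Or.inr h
      · exact Or.inl h
    have hhead : ∀ n, (l n).headI = (l 0).headI := by
      intro n
      induction n with
      | zero => rfl
      | succ k ih =>
        rcases hcomp k with h | h
        · rw [← headI_eq_of_prefix h (hne k), ih]
        · rw [headI_eq_of_prefix h (hne (k+1)), ih]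
    set β : Ordinal := (l 0).headI with hβ
    have hcons : ∀ n, l n = β :: (l n).tail := by
      intro n
      have h := hhead n
      cases hl2 : l n with
      | nil => exact absurd hl2 (hne n)
      | cons a t => rw [hl2] at h; simp only [List.headI_cons] at h; simp [h]
    have hβα : β < α := by
      have hmem : β ∈ l 0 := by rw [hcons 0]; exact List.mem_cons_self
      exact (f (0+N)).2.2 _ hmem
    have hsorted : ∀ n, ((l n).tail).Pairwise (· > ·) ∧ ∀ x ∈ (l n).tail, x < β := by
      intro n
      have hs : (l n).Pairwise (· > ·) := (f (n+N)).2.1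
      rw [hcons n] at hs
      rw [List.pairwise_cons] at hs
      exact ⟨hs.2, hs.1⟩
    set G' : SimpleGraph ℕ :=
      { Adj := fun m n => G.Adj (m+1) (n+1)
        symm := ⟨fun _ _ h => h.symm⟩
        loopless := ⟨fun _ h => G.loopless.irrefl _ h⟩ } with hG'
    set g : ℕ → TT β := fun n => ⟨(l n).tail, (hsorted n).1, (hsorted n).2⟩ with hg
    have hginj : Function.Injective g := by
      intro m n hmn
      have ht : (l m).tail = (l n).tail := congrArg Subtype.val hmn
      have : l m = l n := by rw [hcons m, hcons n, ht]
      have : f (m+N) = f (n+N) := Subtype.ext this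
      have := f.injective this
      omega
    have hlen : ∀ n, ((l n).tail).length + 1 = (l n).length := by
      intro n
      conv_rhs => rw [hcons n]
      simp
    refine IH β hβα G' ⟨⟨g, hginj⟩, ?_⟩
    intro u v huv
    have h := hf (u+N) (v+N) (rayG_adj_shift N huv)
    refine ⟨fun he => h.1 ?_, ?_, ?_⟩
    · have ht : (l u).tail = (l v).tail := congrArg Subtype.val he
      exact Subtype.ext (show l u = l v by rw [hcons u, hcons v, ht])
    · rcases h.2.1 with hc | hc
      · exact Or.inl (tail_prefix_tail hc)
      · exact Or.inr (tail_prefix_tail hc)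
    · show G'.Adj ((l u).tail).length ((l v).tail).length
      show G.Adj (((l u).tail).length + 1) (((l v).tail).length + 1)
      rw [hlen u, hlen v]
      exact h.2.2

end NoRayAux

/-- for an infinite cardinal `λ`, `α < λ⁺`, and `|T α| ≤ λ`, the graph
`G_α` contains no infinite ray `P_ω` as a (not necessarily induced) subgraph. -/
theorem stmt5 (G : SimpleGraph ℕ) (lam : Cardinal) (hlam : Cardinal.aleph0 ≤ lam)
    (α : Ordinal) (hα : α < (Order.succ lam).ord)
    (hsize : Cardinal.mk (TT α) ≤ Cardinal.lift.{1} lam) :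
    ¬ SubCopy rayG (Gg G α) := by
  exact noray α G
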